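/- Let K > 0 and 0 < P < 2K, and for each even N > 4 let θ̂₁(N) ∈ [0, π/2] satisfy the type-1 saddle equation 2K·cos(2θ̂₁(N)/N − π/N)·sin((1 − 2/N)·θ̂₁(N) + π/N) = P, and suppose θ̂₁(N) → arcsin(P/(2K)) as N → ∞. Then lim_{N→∞} N·(θ̂₁(N) − arcsin(P/(2K))) = −π + 2·arcsin(P/(2K)); i.e. θ̂₁(N) = arcsin(P/(2K)) + (1/N)·(−π + 2·arcsin(P/(2K))) + o(1/N). -/

import Mathlib

open Real Filter Topology

set_option maxHeartbeats 2000000 in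
/-- Let `K > 0`, `0 < P < 2K`, and for each even `N > 4` let
`θ̂₁(N) ∈ [0, π/2]` satisfy the type-1 saddle equation
`2K·cos(2θ̂₁(N)/N − π/N)·sin((1 − 2/N)·θ̂₁(N) + π/N) = P`, and suppose
`θ̂₁(N) → arcsin(P/(2K))` as `N → ∞` (through even `N > 4`). Then
`N·(θ̂₁(N) − arcsin(P/(2K))) → −π + 2·arcsin(P/(2K))`, i.e.
`θ̂₁(N) = arcsin(P/(2K)) + (1/N)(−π + 2 arcsin(P/(2K))) + o(1/N)`. -/
theorem type1_saddle_asymptotics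
    (K P : ℝ) (hK : 0 < K) (hP0 : 0 < P) (hP : P < 2 * K)
    (θ : ℕ → ℝ)
    (hθ : ∀ N : ℕ, Even N → 4 < N →
      θ N ∈ Set.Icc (0 : ℝ) (π / 2) ∧
      2 * K * Real.cos (2 * θ N / N - π / N) *
        Real.sin ((1 - 2 / (N : ℝ)) * θ N + π / N) = P)
    (hconv : Tendsto θ (atTop ⊓ Filter.principal {N : ℕ | Even N ∧ 4 < N})
      (nhds (Real.arcsin (P / (2 * K))))) :
    Tendsto (fun N : ℕ => (N : ℝ) * (θ N - Real.arcsin (P / (2 * K))))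
      (atTop ⊓ Filter.principal {N : ℕ | Even N ∧ 4 < N})
      (nhds (-π + 2 * Real.arcsin (P / (2 * K)))) := by
  set l := atTop ⊓ Filter.principal {N : ℕ | Even N ∧ 4 < N} with hl
  set α := Real.arcsin (P / (2 * K)) with hαdef
  have h2K : (0:ℝ) < 2 * K := by linarith
  have hx0 : 0 < P / (2 * K) := div_pos hP0 h2K
  have hx1 : P / (2 * K) < 1 := (div_lt_one h2K).mpr hP
  have hα0 : 0 < α := Real.arcsin_pos.mpr hx0
  have hα2 : α < π / 2 := Real.arcsin_lt_pi_div_two.mpr hx1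
  have hsinα : Real.sin α = P / (2 * K) := Real.sin_arcsin (by linarith) hx1.le
  have hcosα : 0 < Real.cos α :=
    Real.cos_pos_of_mem_Ioo ⟨by linarith [Real.pi_pos], hα2⟩
  set u : ℕ → ℝ := fun N => (2 * θ N - π) / N with hudef
  have hmem : ∀ᶠ N in l, Even N ∧ 4 < N := by
    rw [hl, eventually_inf_principal]
    exact Filter.Eventually.of_forall fun N h => h
  have hNpos : ∀ᶠ N : ℕ in l, (0:ℝ) < (N:ℝ) := by
    filter_upwards [hmem] with N hN
    exact_mod_cast (by omega : 0 < N)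
  have h1N : Tendsto (fun N : ℕ => (1:ℝ)/N) l (𝓝 0) :=
    tendsto_one_div_atTop_nhds_zero_nat.mono_left inf_le_left
  have h2θ : Tendsto (fun N => 2 * θ N - π) l (𝓝 (2*α - π)) :=
    (hconv.const_mul 2).sub_const π
  have hu : Tendsto u l (𝓝 0) := by
    have h := h2θ.mul h1N
    rw [mul_zero] at h
    refine h.congr fun N => ?_
    simp [hudef, div_eq_mul_inv, one_div]
  have hφ : Tendsto (fun N => θ N - u N) l (𝓝 α) := by
    simpa using hconv.sub hu
  -- rewrite the saddle equation
  have heq : ∀ᶠ N in l, Real.cos (u N) * Real.sin (θ N - u N) = Real.sin α := by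
    filter_upwards [hmem, hNpos] with N hN hNp
    have hN0 : (N:ℝ) ≠ 0 := ne_of_gt hNp
    obtain ⟨_, heqN⟩ := hθ N hN.1 hN.2
    have e1 : 2 * θ N / N - π / N = u N := by
      rw [hudef]; field_simp
    have e2 : (1 - 2/(N:ℝ)) * θ N + π / N = θ N - u N := by
      rw [hudef]; field_simp; ring
    rw [e1, e2] at heqN
    rw [hsinα]
    rw [eq_div_iff (ne_of_gt h2K)]
    linarith [heqN]
  -- eventual bounds
  have hcosu : ∀ᶠ N in l, (1:ℝ)/2 < Real.cos (u N) := by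
    have h : Tendsto (fun N => Real.cos (u N)) l (𝓝 1) := by
      simpa [Function.comp_def] using (Real.continuous_cos.tendsto 0).comp hu
    exact h.eventually_const_lt (by norm_num)
  have hcosφα : ∀ᶠ N in l, Real.cos α / 2 < Real.cos ((θ N - u N + α)/2) := by
    have h : Tendsto (fun N => Real.cos ((θ N - u N + α)/2)) l (𝓝 (Real.cos α)) := by
      have h0 : Tendsto (fun N => (θ N - u N + α)/2) l (𝓝 ((α + α)/2)) :=
        (hφ.add_const α).div_const 2
      have := (Real.continuous_cos.tendsto ((α + α)/2)).comp h0
      simpa [add_self_div_two, Function.comp_def] using this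
    exact h.eventually_const_lt (half_lt_self hcosα)
  have hdsmall : ∀ᶠ N in l, |θ N - u N - α| < π := by
    have h : Tendsto (fun N => |θ N - u N - α|) l (𝓝 0) := by
      simpa using (hφ.sub_const α).abs
    exact h.eventually_lt_const Real.pi_pos
  -- the key limit
  have hkey : Tendsto (fun N : ℕ => (N:ℝ) * (θ N - u N - α)) l (𝓝 0) := by
    have hg : Tendsto (fun N => (π / Real.cos α) * (|2 * θ N - π| * |u N|)) l (𝓝 0) := by
      have h := (h2θ.abs.mul hu.abs).const_mul (π / Real.cos α)
      simpa [abs_zero] using h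
    apply squeeze_zero_norm' _ hg
    filter_upwards [hNpos, heq, hcosu, hcosφα, hdsmall] with N hNp heqN hcN hcφ hdN
    have hπ := Real.pi_pos
    set φ := θ N - u N with hφdef
    set d := φ - α with hddef
    have hsα : 0 < Real.sin α := by rw [hsinα]; exact hx0
    have hsφ1 : Real.sin φ ≤ 1 := Real.sin_le_one _
    have hc1 : Real.cos (u N) ≤ 1 := Real.cos_le_one _
    have h1c : 1 - (u N)^2/2 ≤ Real.cos (u N) := Real.one_sub_sq_div_two_le_cos
    -- sin φ ≥ sin α (upper bound on sinφ−sinα)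
    have hup : Real.sin φ - Real.sin α ≤ (u N)^2 / 2 := by
      have : Real.sin φ - Real.sin α = Real.sin φ * (1 - Real.cos (u N)) := by
        rw [← heqN]; ring
      nlinarith
    -- lower bound via sin_sub_sin and Jordan inequality
    have hid : Real.sin φ - Real.sin α = 2 * Real.sin (d/2) * Real.cos ((φ + α)/2) :=
      Real.sin_sub_sin φ α
    have hnn : 0 ≤ Real.sin φ - Real.sin α := by
      have : Real.sin φ = Real.sin α / Real.cos (u N) := by
        rw [eq_div_iff (by linarith : Real.cos (u N) ≠ 0), mul_comm]
        exact heqN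
      rw [this]
      have : Real.sin α ≤ Real.sin α / Real.cos (u N) := by
        rw [le_div_iff₀ (by linarith)]
        nlinarith
      linarith
    have hsd : 0 ≤ Real.sin (d/2) := by
      by_contra hneg
      push_neg at hneg
      nlinarith [hid, hnn, hcφ, hcosα]
    have hjordan : 2/π * |d/2| ≤ |Real.sin (d/2)| := by
      apply Real.mul_abs_le_abs_sin
      rw [abs_div, abs_two]
      linarith [hdN]
    rw [abs_of_nonneg hsd, abs_div, abs_two] at hjordan
    have hlow : |d| * Real.cos α / π ≤ Real.sin φ - Real.sin α := by
      rw [hid]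
      have h1 : |d| / π ≤ Real.sin (d/2) := by
        calc |d| / π = 2/π * (|d|/2) := by ring
          _ ≤ Real.sin (d/2) := hjordan
      calc |d| * Real.cos α / π = (|d| / π) * Real.cos α := by ring
        _ ≤ Real.sin (d/2) * Real.cos α := mul_le_mul_of_nonneg_right h1 hcosα.le
        _ = Real.sin (d/2) * (2 * (Real.cos α / 2)) := by ring
        _ ≤ Real.sin (d/2) * (2 * Real.cos ((φ + α)/2)) := by
            apply mul_le_mul_of_nonneg_left (by linarith [hcφ]) hsd
        _ = 2 * Real.sin (d/2) * Real.cos ((φ + α)/2) := by ring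
    -- combine
    have hdbound : |d| ≤ π / Real.cos α * ((u N)^2 / 2) * 2 := by
      rw [div_le_iff₀ hπ] at hlow
      rw [div_mul_eq_mul_div, div_mul_eq_mul_div, le_div_iff₀ hcosα]
      calc |d| * Real.cos α ≤ (Real.sin φ - Real.sin α) * π := hlow
        _ ≤ (u N)^2/2 * π := mul_le_mul_of_nonneg_right hup hπ.le
        _ ≤ π * ((u N)^2/2) * 2 := by
            have := mul_nonneg hπ.le (sq_nonneg (u N))
            linarith
    have hNu : (N:ℝ) * u N = 2 * θ N - π := by
      rw [hudef]
      field_simp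
    have hNu2 : (N:ℝ) * (u N)^2 = |2 * θ N - π| * |u N| := by
      rw [← hNu, ← abs_mul]
      have h9 : (N:ℝ) * u N * u N = (N:ℝ) * (u N)^2 := by ring
      rw [h9, abs_of_nonneg (by positivity)]
    have : ‖(N:ℝ) * d‖ = (N:ℝ) * |d| := by
      rw [Real.norm_eq_abs, abs_mul, abs_of_nonneg hNp.le]
    rw [hddef, hφdef] at this
    rw [this]
    calc (N:ℝ) * |θ N - u N - α| ≤ (N:ℝ) * (π / Real.cos α * ((u N)^2 / 2) * 2) := by
          apply mul_le_mul_of_nonneg_left _ hNp.le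
          exact hdbound
      _ = π / Real.cos α * ((N:ℝ) * (u N)^2) := by ring
      _ = π / Real.cos α * (|2 * θ N - π| * |u N|) := by rw [hNu2]
  -- assemble
  have hfin : Tendsto (fun N : ℕ => (N:ℝ)*(θ N - u N - α) + (2*θ N - π)) l
      (𝓝 (0 + (2*α - π))) := hkey.add h2θ
  have hee : ∀ᶠ N : ℕ in l, (N:ℝ)*(θ N - u N - α) + (2*θ N - π) = (N:ℝ)*(θ N - α) := by
    filter_upwards [hNpos] with N hNp
    have hN0 : (N:ℝ) ≠ 0 := ne_of_gt hNp
    have hNu' : (N:ℝ) * u N = 2 * θ N - π := by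
      rw [hudef, mul_comm]
      exact div_mul_cancel₀ _ hN0
    linear_combination -hNu'
  have := hfin.congr' hee
  have heq' : (0:ℝ) + (2*α - π) = -π + 2*α := by ring
  rw [heq'] at this
  exact this
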